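/- The function Σ(r) = (6/π) cosh(r) log(coth(r)/2) for 0 < r ≤ arctanh(1/2) (and 0 otherwise) is a probability density: ∫₀^{arctanh(1/2)} (6/π) cosh(r) log(coth(r)/2) dr = 1. -/

import Mathlib

/-- Inverse hyperbolic tangent. -/
noncomputable def arctanh (x : ℝ) : ℝ := (1 / 2) * Real.log ((1 + x) / (1 - x))

open Real MeasureTheory Set intervalIntegral

/-- The antiderivative. -/
noncomputable def rectG (r : ℝ) : ℝ :=
  Real.sinh r * Real.log (Real.cosh r / 2) - Real.sinh r * Real.log (Real.sinh r)
    + Real.arctan (Real.sinh r)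

lemma rectG_deriv {x : ℝ} (hx : 0 < x) :
    HasDerivAt rectG (Real.cosh x * Real.log (Real.cosh x / Real.sinh x / 2)) x := by
  have hsx : 0 < Real.sinh x := Real.sinh_pos_iff.mpr hx
  have hcx : (0 : ℝ) < Real.cosh x := Real.cosh_pos x
  have d1 : HasDerivAt Real.sinh (Real.cosh x) x := Real.hasDerivAt_sinh x
  have d2 : HasDerivAt (fun r => Real.log (Real.cosh r / 2))
      (Real.sinh x / 2 / (Real.cosh x / 2)) x :=
    ((Real.hasDerivAt_cosh x).div_const 2).log (by positivity)
  have d3 : HasDerivAt (fun r => Real.log (Real.sinh r)) (Real.cosh x / Real.sinh x) x :=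
    d1.log hsx.ne'
  have d4 := d1.arctan
  have hG := ((d1.mul d2).sub (d1.mul d3)).add d4
  convert hG using 1
  · rfl
  · rfl
  · rfl
  have hsq : Real.cosh x ^ 2 = 1 + Real.sinh x ^ 2 := (Real.cosh_sq x).trans (by ring)
  have hlog : Real.log (Real.cosh x / Real.sinh x / 2)
      = Real.log (Real.cosh x / 2) - Real.log (Real.sinh x) := by
    rw [show Real.cosh x / Real.sinh x / 2 = (Real.cosh x / 2) / Real.sinh x by ring,
      Real.log_div (by positivity) hsx.ne']
  rw [hlog]
  have h1 : (1 : ℝ) + Real.sinh x ^ 2 ≠ 0 := by positivity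
  field_simp
  ring_nf
  nlinarith [hsq, sq_nonneg (Real.sinh x), sq_nonneg (Real.cosh x)]

lemma rectG_continuous : Continuous rectG := by
  have h1 : Continuous fun r => Real.sinh r * Real.log (Real.cosh r / 2) :=
    Real.continuous_sinh.mul <| (Real.continuous_cosh.div_const 2).log
      fun x => by positivity
  have h2 : Continuous fun r => Real.sinh r * Real.log (Real.sinh r) :=
    Real.continuous_mul_log.comp Real.continuous_sinh
  exact (h1.sub h2).add (Real.continuous_arctan.comp Real.continuous_sinh)

theorem rectangular_density_integrates_to_one :
    ∫ r in (0 : ℝ)..arctanh (1 / 2),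
        (6 / Real.pi) * Real.cosh r * Real.log ((Real.cosh r / Real.sinh r) / 2) = 1 := by
  have hπ : Real.pi ≠ 0 := Real.pi_ne_zero
  set b := arctanh (1 / 2) with hbdef
  have hb : b = Real.log 3 / 2 := by
    rw [hbdef]
    unfold arctanh
    norm_num
    ring
  have hb0 : 0 < b := by
    rw [hb]; positivity
  have hs : Real.sqrt 3 * Real.sqrt 3 = 3 := Real.mul_self_sqrt (by norm_num)
  have hs0 : 0 < Real.sqrt 3 := Real.sqrt_pos.mpr (by norm_num)
  have hexp : Real.exp b = Real.sqrt 3 := by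
    rw [hb, Real.sqrt_eq_rpow, Real.rpow_def_of_pos (by norm_num : (0:ℝ) < 3)]
    ring_nf
  have hexpneg : Real.exp (-b) = Real.sqrt 3 / 3 := by
    rw [Real.exp_neg, hexp, eq_div_iff (by norm_num : (3:ℝ) ≠ 0), inv_mul_eq_div,
      div_eq_iff hs0.ne']
    linarith [hs]
  have hsinh : Real.sinh b = Real.sqrt 3 / 3 := by
    rw [Real.sinh_eq, hexp, hexpneg]; ring
  have hcosh : Real.cosh b = 2 * Real.sqrt 3 / 3 := by
    rw [Real.cosh_eq, hexp, hexpneg]; ring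
  have hcosh2 : Real.cosh b ≤ 2 := by
    rw [hcosh]; nlinarith [hs, hs0]
  have hb1 : b ≤ 1 := by
    rw [hb]
    have := Real.log_le_sub_one_of_pos (by norm_num : (0:ℝ) < 3)
    linarith
  -- key: the interval integral of the unnormalized integrand is π/6
  have hint : IntervalIntegrable
      (fun r => Real.cosh r * Real.log (Real.cosh r / Real.sinh r / 2)) volume 0 b := by
    have hg : IntervalIntegrable (fun r : ℝ => 4 * r ^ (-(1/2) : ℝ)) volume 0 b :=
      (intervalIntegral.intervalIntegrable_rpow' (by norm_num : (-1:ℝ) < -(1/2))).const_mul 4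
    refine hg.mono_fun ?_ ?_
    · exact ((Real.continuous_cosh.measurable).mul (Real.measurable_log.comp
        ((Real.continuous_cosh.measurable.div Real.continuous_sinh.measurable).div_const
          2))).aestronglyMeasurable
    · rw [uIoc_of_le hb0.le]
      filter_upwards [ae_restrict_mem measurableSet_Ioc] with r hr
      obtain ⟨hr0, hrb⟩ := hr
      have hsr : 0 < Real.sinh r := Real.sinh_pos_iff.mpr hr0
      have hcr : (0 : ℝ) < Real.cosh r := Real.cosh_pos r
      have hrs : r ≤ Real.sinh r := (Real.self_lt_sinh_iff.mpr hr0).le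
      have hcr2 : Real.cosh r ≤ 2 := by
        calc Real.cosh r ≤ Real.cosh b := by
              rw [Real.cosh_le_cosh, abs_of_pos hr0, abs_of_pos hb0]; exact hrb
          _ ≤ 2 := hcosh2
      -- cosh r ≥ 2 sinh r on (0, b]
      have hcoth : 2 * Real.sinh r ≤ Real.cosh r := by
        have hexpr : Real.exp r ≤ Real.sqrt 3 := by
          rw [← hexp]; exact Real.exp_le_exp.mpr hrb
        have hexpr0 : 0 < Real.exp r := Real.exp_pos r
        rw [Real.sinh_eq, Real.cosh_eq, Real.exp_neg]
        have h3 : Real.exp r * Real.exp r ≤ 3 := by nlinarith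
        have hinv : Real.exp r * (Real.exp r)⁻¹ = 1 := mul_inv_cancel₀ hexpr0.ne'
        have hy : 0 < (Real.exp r)⁻¹ := inv_pos.mpr hexpr0
        have h4 : Real.exp r * Real.exp r * (Real.exp r)⁻¹ ≤ 3 * (Real.exp r)⁻¹ :=
          mul_le_mul_of_nonneg_right h3 hy.le
        have h5 : Real.exp r * Real.exp r * (Real.exp r)⁻¹ = Real.exp r := by
          rw [mul_assoc, hinv, mul_one]
        rw [h5] at h4
        linarith
      set c := Real.cosh r / Real.sinh r / 2 with hc
      have hc1 : 1 ≤ c := by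
        rw [hc, le_div_iff₀ (by norm_num : (0:ℝ) < 2), one_mul,
          le_div_iff₀ hsr]
        linarith
      have hcle : c ≤ 1 / r := by
        rw [hc, div_le_div_iff₀ (by positivity) hr0]
        calc Real.cosh r / Real.sinh r * r ≤ Real.cosh r / Real.sinh r * Real.sinh r := by
              apply mul_le_mul_of_nonneg_left hrs (by positivity)
          _ = Real.cosh r := by field_simp
          _ ≤ 2 := hcr2
          _ = 1 * 2 := by ring
      have hsqrtr : 0 < Real.sqrt r := Real.sqrt_pos.mpr hr0
      have hlogc : Real.log c ≤ 2 / Real.sqrt r := by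
        have h1 : Real.log c ≤ Real.log (1 / r) :=
          Real.log_le_log (by linarith) hcle
        have h2 : Real.log (1 / r) = 2 * Real.log (1 / Real.sqrt r) := by
          rw [show (1:ℝ) / r = (1 / Real.sqrt r) ^ 2 by
            rw [div_pow, one_pow, Real.sq_sqrt hr0.le], Real.log_pow]
          push_cast; ring
        have h3 : Real.log (1 / Real.sqrt r) ≤ 1 / Real.sqrt r :=
          (Real.log_le_sub_one_of_pos (by positivity)).trans (by linarith [hsqrtr])
        calc Real.log c ≤ Real.log (1 / r) := h1
          _ = 2 * Real.log (1 / Real.sqrt r) := h2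
          _ ≤ 2 * (1 / Real.sqrt r) := by linarith
          _ = 2 / Real.sqrt r := by ring
      have hlogc0 : 0 ≤ Real.log c := Real.log_nonneg hc1
      have hrpow : r ^ (-(1/2) : ℝ) = 1 / Real.sqrt r := by
        simp [Real.rpow_neg hr0.le, Real.sqrt_eq_rpow]
        
      rw [Real.norm_eq_abs, Real.norm_eq_abs, abs_of_nonneg (by positivity),
        abs_of_nonneg (by rw [hrpow]; positivity), hrpow]
      calc Real.cosh r * Real.log c ≤ 2 * (2 / Real.sqrt r) := by
            apply mul_le_mul hcr2 hlogc hlogc0 (by norm_num)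
        _ = 4 * (1 / Real.sqrt r) := by ring
  have hftc : ∫ r in (0:ℝ)..b, Real.cosh r * Real.log (Real.cosh r / Real.sinh r / 2)
      = rectG b - rectG 0 := by
    apply intervalIntegral.integral_eq_sub_of_hasDeriv_right_of_le hb0.le
      rectG_continuous.continuousOn
      (fun x hx => (rectG_deriv hx.1).hasDerivWithinAt) hint
  have hG0 : rectG 0 = 0 := by
    simp [rectG, Real.sinh_zero, Real.arctan_zero]
  have hGb : rectG b = Real.pi / 6 := by
    have hcb2 : Real.cosh b / 2 = Real.sinh b := by rw [hcosh, hsinh]; ring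
    have harc : Real.arctan (Real.sqrt 3 / 3) = Real.pi / 6 := by
      have h13 : Real.sqrt 3 / 3 = 1 / Real.sqrt 3 := by
        field_simp
        exact Real.sq_sqrt (by norm_num)
      rw [h13, ← Real.tan_pi_div_six, Real.arctan_tan]
      · linarith [Real.pi_pos]
      · linarith [Real.pi_pos]
    rw [rectG, hcb2, hsinh, harc]
    ring
  have key : ∫ r in (0:ℝ)..b, Real.cosh r * Real.log (Real.cosh r / Real.sinh r / 2)
      = Real.pi / 6 := by rw [hftc, hG0, hGb]; ring
  calc ∫ r in (0:ℝ)..b, (6 / Real.pi) * Real.cosh r * Real.log (Real.cosh r / Real.sinh r / 2)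
      = ∫ r in (0:ℝ)..b, (6 / Real.pi) * (Real.cosh r * Real.log (Real.cosh r / Real.sinh r / 2)) := by
        simp_rw [mul_assoc]
    _ = (6 / Real.pi) * ∫ r in (0:ℝ)..b, Real.cosh r * Real.log (Real.cosh r / Real.sinh r / 2) :=
        intervalIntegral.integral_const_mul _ _
    _ = (6 / Real.pi) * (Real.pi / 6) := by rw [key]
    _ = 1 := by field_simp
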